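/- arXiv:2308.06128 — 4 statements merged into one kernel-verified Lean document; each statement's English description precedes it below -/
import Mathlib

section
/- Let N, l₁, l₂, m₁, m₂ be real numbers with N > l₁ > 1, l₂ > 1, m₁ > 0, m₂ > 0, let l₁* := l₁N/(N−l₁), and let r be a real number with max{1/l₁, 1/l₂} < r < min{l₁/m₁, l₂/m₂}. Assume l₁*·m₁·(l₁+1) − l₁²·(l₁* + m₁) ≥ 0, and set q := l₁/(l₁(1−r)+1). Then l₁*/(q·l₁) > 1. -/
/-- Lemma 6.2: the iteration ratio `l₁*/(q l₁)` exceeds 1. -/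
theorem stmt_1 (N l₁ l₂ m₁ m₂ r l₁s q : ℝ)
    (hN : l₁ < N) (hl₁ : 1 < l₁) (hl₂ : 1 < l₂) (hm₁ : 0 < m₁) (hm₂ : 0 < m₂)
    (hl₁s : l₁s = l₁ * N / (N - l₁))
    (hr₁ : max (1 / l₁) (1 / l₂) < r) (hr₂ : r < min (l₁ / m₁) (l₂ / m₂))
    (hcond : 0 ≤ l₁s * m₁ * (l₁ + 1) - l₁ ^ 2 * (l₁s + m₁))
    (hq : q = l₁ / (l₁ * (1 - r) + 1)) :
    1 < l₁s / (q * l₁) := by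
  have hNl : 0 < N - l₁ := by linarith
  have hl₁0 : (0:ℝ) < l₁ := by linarith
  have hl₁s0 : 0 < l₁s := by
    rw [hl₁s]; exact div_pos (by nlinarith) hNl
  have hrm : r * m₁ < l₁ := by
    have h := lt_of_lt_of_le hr₂ (min_le_left _ _)
    have := (lt_div_iff₀ hm₁).mp h
    linarith
  have hm : l₁ ^ 2 < m₁ * (l₁ + 1) := by
    nlinarith [mul_pos (mul_pos hl₁0 hl₁0) hm₁]
  have hD : 0 < l₁ * (1 - r) + 1 := by
    nlinarith
  have hq0 : 0 < q := by rw [hq]; positivity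
  have hql : 0 < q * l₁ := mul_pos hq0 hl₁0
  rw [lt_div_iff₀ hql, one_mul, hq, div_mul_eq_mul_div, div_lt_iff₀ hD]
  nlinarith [mul_pos (mul_pos hl₁s0 hl₁0) (sub_pos.mpr hrm)]
end

section
/- Let a, l₁, ν₀ be real numbers with a > 1, l₁ > 1, ν₀ > 0 and ν₀ + 1 = a·l₁, and define ν_k := ((a^{k+1} − 1)/(a − 1))·ν₀ for integers k ≥ 0 (equivalently, ν_k = a·ν_{k−1} + ν₀). Let β_k := ∏_{i=0}^{k} (1 + ν_i)/(ν_i + l₁). Then the sequence (β_k) converges as k → ∞ to a limit β satisfying 0 < β < 1. -/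
/-- Lemma 6.4: the product `β_k` converges to a limit `β` with `0 < β < 1`. -/
theorem stmt_3 (a l₁ ν₀ : ℝ)
    (ha : 1 < a) (hl₁ : 1 < l₁) (hν₀ : 0 < ν₀) (hrel : ν₀ + 1 = a * l₁)
    (ν : ℕ → ℝ)
    (hν : ∀ k : ℕ, ν k = ((a ^ (k + 1) - 1) / (a - 1)) * ν₀) :
    ∃ β : ℝ, 0 < β ∧ β < 1 ∧
      Filter.Tendsto (fun k : ℕ => ∏ i ∈ Finset.range (k + 1), (1 + ν i) / (ν i + l₁))
        Filter.atTop (nhds β) := by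
  have ha0 : (0 : ℝ) < a := lt_trans one_pos ha
  have ha1 : (0 : ℝ) < a - 1 := by linarith
  have hane : a - 1 ≠ 0 := ne_of_gt ha1
  have hν0 : ν 0 = ν₀ := by rw [hν]; field_simp; ring
  have hνpos : ∀ k, 0 < ν k := by
    intro k
    rw [hν]
    have h1 : (1 : ℝ) < a ^ (k + 1) := one_lt_pow₀ ha (Nat.succ_ne_zero k)
    have : 0 < a ^ (k + 1) - 1 := by linarith
    positivity
  have hden : ∀ k, 0 < ν k + l₁ := fun k => by have := hνpos k; linarith
  have hkey : ∀ k, 1 + ν (k + 1) = a * (ν k + l₁) := by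
    intro k
    rw [hν, hν]
    field_simp
    ring_nf
    nlinarith [hrel, pow_pos ha0 (k + 1)]
  have hprod : ∀ k, ∏ i ∈ Finset.range (k + 1), (1 + ν i) / (ν i + l₁)
      = a ^ k * (1 + ν₀) / (ν k + l₁) := by
    intro k
    induction k with
    | zero => simp [hν0]
    | succ n ih =>
      rw [Finset.prod_range_succ, ih, hkey n]
      have h1 := (hden n).ne'
      have h2 := (hden (n + 1)).ne'
      field_simp
      ring
  set L : ℝ := a * ν₀ / (a - 1) with hL
  have hLpos : 0 < L := by positivity
  refine ⟨(1 + ν₀) / L, by positivity, ?_, ?_⟩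
  · rw [div_lt_one hLpos, hL, lt_div_iff₀ ha1]
    nlinarith
  · have hg : ∀ k, (ν k + l₁) / a ^ k = L + (l₁ - ν₀ / (a - 1)) * (1 / a) ^ k := by
      intro k
      rw [hν, hL]
      have hak : (a : ℝ) ^ k ≠ 0 := by positivity
      have hane' : (-1 : ℝ) + a ≠ 0 := by intro h; apply hane; linarith
      rw [div_pow, one_pow]
      field_simp
      ring
    have htend0 : Filter.Tendsto (fun k : ℕ => (1 / a) ^ k) Filter.atTop (nhds 0) := by
      apply tendsto_pow_atTop_nhds_zero_of_lt_one
      · positivity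
      · rw [div_lt_one ha0]; exact ha
    have hgt : Filter.Tendsto (fun k : ℕ => (ν k + l₁) / a ^ k) Filter.atTop (nhds L) := by
      simp only [hg]
      have := (htend0.const_mul (l₁ - ν₀ / (a - 1))).const_add L
      simpa using this
    have := Filter.Tendsto.div (tendsto_const_nhds (x := (1 + ν₀))) hgt hLpos.ne'
    refine this.congr ?_
    intro k
    simp only [Pi.div_apply]
    rw [hprod k]
    have hak : (a : ℝ) ^ k ≠ 0 := by positivity
    have h2 := (hden k).ne'
    field_simp
end

section
/- Let N ≥ 1, δ > 0, l₁ > 0, l₂ > 0 and α > 0. Let F : ℝ^N × ℝ × ℝ → ℝ be such that (u,v) ↦ F(x,u,v) is continuously differentiable for each x and F(x,u,v) ≥ 0 whenever u² + v² < δ², and let a₁, a₂ : ℝ^N → [0,∞) satisfy ∂_u F(x,u,v)·u + ∂_v F(x,u,v)·v − α·F(x,u,v) ≤ a₁(x)|u|^{l₁} + a₂(x)|v|^{l₂} whenever u² + v² < δ². Let ρ : ℝ² → [0,1] be a C¹ function with ρ(u,v) = 1 when u² + v² ≤ δ²/4, ρ(u,v) = 0 when u² + v² ≥ δ², and u·ρ_u(u,v)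 + v·ρ_v(u,v) ≤ 0 for all (u,v) ∈ ℝ². Set F̃(x,u,v) := ρ(u,v)·F(x,u,v). Then for ALL (x,u,v) ∈ ℝ^N × ℝ × ℝ: ∂_u F̃(x,u,v)·u + ∂_v F̃(x,u,v)·v − α·F̃(x,u,v) ≤ a₁(x)|u|^{l₁} + a₂(x)|v|^{l₂}. -/
/-- Condition (F₂′) of Lemma 3.1: the cut-off modification `F̃ = ρ F` satisfies
the Ambrosetti–Rabinowitz-type inequality (F₂) globally. -/
theorem stmt_7 (N : ℕ) (hN : 1 ≤ N) (δ l₁ l₂ α : ℝ)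
    (hδ : 0 < δ) (hl₁ : 0 < l₁) (hl₂ : 0 < l₂) (hα : 0 < α)
    (F : (Fin N → ℝ) → ℝ → ℝ → ℝ)
    (hF : ∀ x, ContDiff ℝ 1 (fun p : ℝ × ℝ => F x p.1 p.2))
    (hFnn : ∀ x (u v : ℝ), u ^ 2 + v ^ 2 < δ ^ 2 → 0 ≤ F x u v)
    (a₁ a₂ : (Fin N → ℝ) → ℝ) (ha₁ : ∀ x, 0 ≤ a₁ x) (ha₂ : ∀ x, 0 ≤ a₂ x)
    (hAR : ∀ x (u v : ℝ), u ^ 2 + v ^ 2 < δ ^ 2 →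
      deriv (fun u' => F x u' v) u * u + deriv (fun v' => F x u v') v * v
        - α * F x u v ≤ a₁ x * |u| ^ l₁ + a₂ x * |v| ^ l₂)
    (ρ : ℝ × ℝ → ℝ) (hρ : ContDiff ℝ 1 ρ)
    (hρ01 : ∀ p, ρ p ∈ Set.Icc (0 : ℝ) 1)
    (hρ1 : ∀ p : ℝ × ℝ, p.1 ^ 2 + p.2 ^ 2 ≤ δ ^ 2 / 4 → ρ p = 1)
    (hρ0 : ∀ p : ℝ × ℝ, δ ^ 2 ≤ p.1 ^ 2 + p.2 ^ 2 → ρ p = 0)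
    (hρsign : ∀ u v : ℝ,
      u * deriv (fun u' => ρ (u', v)) u + v * deriv (fun v' => ρ (u, v')) v ≤ 0) :
    ∀ x (u v : ℝ),
      deriv (fun u' => ρ (u', v) * F x u' v) u * u
        + deriv (fun v' => ρ (u, v') * F x u v') v * v
        - α * (ρ (u, v) * F x u v) ≤ a₁ x * |u| ^ l₁ + a₂ x * |v| ^ l₂ := by
  intro x u v
  have hRHS : 0 ≤ a₁ x * |u| ^ l₁ + a₂ x * |v| ^ l₂ :=
    add_nonneg (mul_nonneg (ha₁ x) (Real.rpow_nonneg (abs_nonneg u) l₁))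
      (mul_nonneg (ha₂ x) (Real.rpow_nonneg (abs_nonneg v) l₂))
  have hdF1 : ∀ u' v' : ℝ, DifferentiableAt ℝ (fun t => F x t v') u' := fun u' v' =>
    by have := ((((hF x).differentiable one_ne_zero) (u', v')).comp u'
      ((differentiableAt_id (𝕜 := ℝ) (x := u')).prodMk (differentiableAt_const v'))); exact this
  have hdF2 : ∀ u' v' : ℝ, DifferentiableAt ℝ (fun t => F x u' t) v' := fun u' v' =>
    by have := ((((hF x).differentiable one_ne_zero) (u', v')).comp v'
      ((differentiableAt_const u').prodMk differentiableAt_id)); exact this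
  have hdρ1 : ∀ u' v' : ℝ, DifferentiableAt ℝ (fun t => ρ (t, v')) u' := fun u' v' =>
    by have := (((hρ.differentiable one_ne_zero) (u', v')).comp u'
      ((differentiableAt_id (𝕜 := ℝ) (x := u')).prodMk (differentiableAt_const v'))); exact this
  have hdρ2 : ∀ u' v' : ℝ, DifferentiableAt ℝ (fun t => ρ (u', t)) v' := fun u' v' =>
    by have := (((hρ.differentiable one_ne_zero) (u', v')).comp v'
      ((differentiableAt_const u').prodMk differentiableAt_id)); exact this
  have e1 : deriv (fun u' => ρ (u', v) * F x u' v) u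
      = deriv (fun u' => ρ (u', v)) u * F x u v + ρ (u, v) * deriv (fun u' => F x u' v) u :=
    deriv_mul (hdρ1 u v) (hdF1 u v)
  have e2 : deriv (fun v' => ρ (u, v') * F x u v') v
      = deriv (fun v' => ρ (u, v')) v * F x u v + ρ (u, v) * deriv (fun v' => F x u v') v :=
    deriv_mul (hdρ2 u v) (hdF2 u v)
  rcases lt_or_ge (u ^ 2 + v ^ 2) (δ ^ 2) with hin | hout
  · -- inner case
    have hP : 0 ≤ F x u v := hFnn x u v hin
    have hE := hAR x u v hin
    have hsign := hρsign u v
    set r := ρ (u, v) with hr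
    have hr0 : 0 ≤ r := (hρ01 (u, v)).1
    have hr1 : r ≤ 1 := (hρ01 (u, v)).2
    set A := deriv (fun u' => ρ (u', v)) u
    set B := deriv (fun v' => ρ (u, v')) v
    set Fu := deriv (fun u' => F x u' v) u
    set Fv := deriv (fun v' => F x u v') v
    rw [e1, e2]
    have h1 : (u * A + v * B) * F x u v ≤ 0 := mul_nonpos_of_nonpos_of_nonneg hsign hP
    have h2 : r * (Fu * u + Fv * v - α * F x u v) ≤ a₁ x * |u| ^ l₁ + a₂ x * |v| ^ l₂ := by
      rcases le_or_gt (Fu * u + Fv * v - α * F x u v) 0 with hE0 | hE0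
      · exact le_trans (mul_nonpos_of_nonneg_of_nonpos hr0 hE0) hRHS
      · calc r * (Fu * u + Fv * v - α * F x u v)
            ≤ 1 * (Fu * u + Fv * v - α * F x u v) :=
              mul_le_mul_of_nonneg_right hr1 hE0.le
          _ = Fu * u + Fv * v - α * F x u v := one_mul _
          _ ≤ _ := hE
    nlinarith [h1, h2]
  · -- outer case
    have hρz : ρ (u, v) = 0 := hρ0 (u, v) hout
    have hmin1 : deriv (fun u' => ρ (u', v)) u = 0 := by
      have : IsLocalMin (fun u' => ρ (u', v)) u := by
        apply Filter.Eventually.of_forall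
        intro t
        simp only [hρz]
        exact (hρ01 (t, v)).1
      exact this.deriv_eq_zero
    have hmin2 : deriv (fun v' => ρ (u, v')) v = 0 := by
      have : IsLocalMin (fun v' => ρ (u, v')) v := by
        apply Filter.Eventually.of_forall
        intro t
        simp only [hρz]
        exact (hρ01 (u, t)).1
      exact this.deriv_eq_zero
    rw [e1, e2, hρz, hmin1, hmin2]
    simpa using hRHS
end

section
/- Let N ≥ 1, δ > 0 and p > 1. Let k ∈ L¹(ℝ^N) ∩ L^∞(ℝ^N), and let g : ℝ² → ℝ be continuous with g(u,v) = 0 whenever u² + v² ≥ δ². Let (u_n), (v_n) be sequences of measurable functions on ℝ^N and u, v measurable functions such that u_n → u almost everywhere, v_n → v almost everywhere, u ∈ L^p(ℝ^N), and sup_n ‖u_n‖_{L^p(ℝ^N)} < ∞. Then ∫_{ℝ^N} |k(x)|·|g(u_n(x),v_n(x)) − g(u(x),v(x))|·|u_n(x) − u(x)| dx → 0 as n → ∞. -/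
open MeasureTheory Filter
open scoped ENNReal NNReal Topology

/-- Lemma 3.5: convergence of the perturbation term. -/
theorem stmt_12 (N : ℕ) (hN : 1 ≤ N) (δ p : ℝ) (hδ : 0 < δ) (hp : 1 < p)
    (k : (Fin N → ℝ) → ℝ)
    (hk1 : Integrable k (volume : Measure (Fin N → ℝ)))
    (hkTop : MemLp k ⊤ (volume : Measure (Fin N → ℝ)))
    (g : ℝ × ℝ → ℝ) (hg : Continuous g)
    (hgsupp : ∀ u v : ℝ, δ ^ 2 ≤ u ^ 2 + v ^ 2 → g (u, v) = 0)
    (un vn : ℕ → (Fin N → ℝ) → ℝ) (u v : (Fin N → ℝ) → ℝ)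
    (hmun : ∀ n, Measurable (un n)) (hmvn : ∀ n, Measurable (vn n))
    (hmu : Measurable u) (hmv : Measurable v)
    (hu_ae : ∀ᵐ x ∂(volume : Measure (Fin N → ℝ)),
      Tendsto (fun n => un n x) atTop (nhds (u x)))
    (hv_ae : ∀ᵐ x ∂(volume : Measure (Fin N → ℝ)),
      Tendsto (fun n => vn n x) atTop (nhds (v x)))
    (hu_Lp : MemLp u (ENNReal.ofReal p) (volume : Measure (Fin N → ℝ)))
    (hbound : ∃ B : ENNReal, B < ⊤ ∧ ∀ n,
      eLpNorm (un n) (ENNReal.ofReal p) (volume : Measure (Fin N → ℝ)) ≤ B) :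
    Tendsto
      (fun n => ∫ x, |k x| * |g (un n x, vn n x) - g (u x, v x)| * |un n x - u x|)
      atTop (nhds 0) := by
  classical
  obtain ⟨B, hBlt, hB⟩ := hbound
  set μ : Measure (Fin N → ℝ) := volume with hμ
  -- boundedness of g
  have hgsupp' : ∀ a : ℝ × ℝ, δ ≤ ‖a‖ → g a = 0 := by
    intro a ha
    rw [Prod.norm_def] at ha
    have : g (a.1, a.2) = 0 := by
      rcases le_max_iff.1 ha with h | h
      · rw [Real.norm_eq_abs] at h
        exact hgsupp _ _ (by nlinarith [sq_abs a.1, sq_nonneg a.2, abs_nonneg a.1])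
      · rw [Real.norm_eq_abs] at h
        exact hgsupp _ _ (by nlinarith [sq_abs a.2, sq_nonneg a.1, abs_nonneg a.2])
    simpa using this
  have hcs : HasCompactSupport g := by
    apply HasCompactSupport.intro (isCompact_closedBall (0 : ℝ × ℝ) δ)
    intro a ha
    apply hgsupp'
    simp only [Metric.mem_closedBall, dist_zero_right, not_le] at ha
    exact ha.le
  obtain ⟨M, hM⟩ := hcs.exists_bound_of_continuous hg
  have hM' : ∀ a : ℝ × ℝ, |g a| ≤ M := by
    intro a; simpa [Real.norm_eq_abs] using hM a
  have hM0 : 0 ≤ M := le_trans (abs_nonneg _) (hM' 0)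
  -- conjugate exponents
  set q : ℝ := p / (p - 1) with hq
  have hpq : p.HolderConjugate q := Real.HolderConjugate.conjExponent hp
  have hqp : q.HolderConjugate p := hpq.symm
  have hq1 : 1 < q := hqp.lt
  have hq0 : 0 < q := lt_trans one_pos hq1
  -- abbreviations
  set w : ℕ → (Fin N → ℝ) → ℝ :=
    fun n x => |k x| * |g (un n x, vn n x) - g (u x, v x)| with hw
  set d : ℕ → (Fin N → ℝ) → ℝ := fun n x => un n x - u x with hd
  -- measurability
  have hkm : AEMeasurable k μ := hk1.aemeasurable
  have hGn : ∀ n, Measurable fun x => g (un n x, vn n x) :=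
    fun n => hg.measurable.comp ((hmun n).prodMk (hmvn n))
  have hG : Measurable fun x => g (u x, v x) := hg.measurable.comp (hmu.prodMk hmv)
  have hwm : ∀ n, AEMeasurable (w n) μ :=
    fun n => (_root_.continuous_abs.measurable.comp_aemeasurable hkm).mul
      (_root_.continuous_abs.measurable.comp ((hGn n).sub hG)).aemeasurable
  have hdm : ∀ n, Measurable (d n) := fun n => (hmun n).sub hmu
  have hWn : ∀ n, AEMeasurable (fun x => ENNReal.ofReal (w n x)) μ :=
    fun n => ENNReal.measurable_ofReal.comp_aemeasurable (hwm n)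
  have hDn : ∀ n, AEMeasurable (fun x => ENNReal.ofReal |d n x|) μ :=
    fun n => ENNReal.measurable_ofReal.comp_aemeasurable
      (_root_.continuous_abs.measurable.comp (hdm n)).aemeasurable
  -- the ENNReal-valued integrals
  set F : ℕ → ℝ≥0∞ :=
    fun n => ∫⁻ x, ENNReal.ofReal (w n x) * ENNReal.ofReal |d n x| ∂μ with hF
  have key : ∀ n, (∫ x, |k x| * |g (un n x, vn n x) - g (u x, v x)| * |un n x - u x| ∂μ)
      = (F n).toReal := by
    intro n
    rw [integral_eq_lintegral_of_nonneg_ae (f := fun x => |k x| * |g (un n x, vn n x) - g (u x, v x)| * |un n x - u x|)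
      (Eventually.of_forall fun x => by positivity)
      (((hwm n).mul (hdm n).abs.aemeasurable).aestronglyMeasurable)]
    congr 1
    apply lintegral_congr
    intro x
    rw [ENNReal.ofReal_mul (by positivity)]
  -- the constant C bounding the Lp norms of d n
  set C : ℝ≥0∞ := B + eLpNorm u (ENNReal.ofReal p) μ with hC
  have hCne : C ≠ ⊤ := ENNReal.add_ne_top.2 ⟨hBlt.ne, hu_Lp.2.ne⟩
  have hp0' : (ENNReal.ofReal p) ≠ 0 := (ENNReal.ofReal_pos.2 (by linarith)).ne'
  have hptop : (ENNReal.ofReal p) ≠ ⊤ := ENNReal.ofReal_ne_top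
  have hdp : ∀ n, (∫⁻ x, ENNReal.ofReal |d n x| ^ p ∂μ) ^ (1 / p) ≤ C := by
    intro n
    have h1 : (∫⁻ x, ENNReal.ofReal |d n x| ^ p ∂μ) ^ (1 / p)
        = eLpNorm (d n) (ENNReal.ofReal p) μ := by
      rw [eLpNorm_eq_lintegral_rpow_enorm_toReal hp0' hptop,
        ENNReal.toReal_ofReal (by linarith : (0:ℝ) ≤ p)]
      congr 1
      apply lintegral_congr
      intro x
      rw [Real.enorm_eq_ofReal_abs]
    rw [h1]
    have h2 : eLpNorm (d n) (ENNReal.ofReal p) μ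
        ≤ eLpNorm (un n) (ENNReal.ofReal p) μ + eLpNorm u (ENNReal.ofReal p) μ :=
      eLpNorm_sub_le (hmun n).aestronglyMeasurable hmu.aestronglyMeasurable
        (ENNReal.one_le_ofReal.2 hp.le)
    exact h2.trans (add_le_add_left (hB n) _)
  -- the L^q integrals of w n
  set I : ℕ → ℝ≥0∞ := fun n => ∫⁻ x, ENNReal.ofReal (w n x) ^ q ∂μ with hI
  -- Hölder
  have hle : ∀ n, F n ≤ I n ^ (1 / q) * C := by
    intro n
    have hhold := ENNReal.lintegral_mul_le_Lp_mul_Lq μ hqp (hWn n) (hDn n)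
    refine le_trans ?_ (mul_le_mul_right (hdp n) (I n ^ (1 / q)))
    simpa [Pi.mul_apply] using hhold
  -- dominated convergence for I
  have hkinfty : eLpNormEssSup k μ ≠ ⊤ := by
    have h := hkTop.2
    rw [eLpNorm_exponent_top] at h
    exact h.ne
  set A : ℝ≥0∞ := eLpNormEssSup k μ with hA
  have hItendsto : Tendsto I atTop (𝓝 0) := by
    have hbnd : ∀ n, (fun x => ENNReal.ofReal (w n x) ^ q)
        ≤ᵐ[μ] fun x => (ENNReal.ofReal (2 * M) * (‖k x‖₊ : ℝ≥0∞)) ^ q := by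
      intro n
      apply Eventually.of_forall
      intro x
      apply ENNReal.rpow_le_rpow _ hq0.le
      rw [← enorm_eq_nnnorm, Real.enorm_eq_ofReal_abs, ← ENNReal.ofReal_mul (by positivity)]
      apply ENNReal.ofReal_le_ofReal
      have habs : |g (un n x, vn n x) - g (u x, v x)| ≤ 2 * M := by
        calc |g (un n x, vn n x) - g (u x, v x)|
            ≤ |g (un n x, vn n x)| + |g (u x, v x)| := abs_sub _ _
          _ ≤ M + M := add_le_add (hM' _) (hM' _)
          _ = 2 * M := by ring
      calc w n x ≤ |k x| * (2 * M) :=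
            mul_le_mul_of_nonneg_left habs (abs_nonneg _)
        _ = 2 * M * |k x| := by ring
    have hfin : (∫⁻ x, (ENNReal.ofReal (2 * M) * (‖k x‖₊ : ℝ≥0∞)) ^ q ∂μ) ≠ ⊤ := by
      have hpt : ∀ᵐ x ∂μ, (ENNReal.ofReal (2 * M) * (‖k x‖₊ : ℝ≥0∞)) ^ q
          ≤ ENNReal.ofReal (2 * M) ^ q * A ^ (q - 1) * (‖k x‖₊ : ℝ≥0∞) := by
        filter_upwards [ae_le_eLpNormEssSup (f := k) (μ := μ)] with x hx
        rw [ENNReal.mul_rpow_of_nonneg _ _ hq0.le, mul_assoc]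
        apply mul_le_mul_right
        by_cases h0 : (‖k x‖₊ : ℝ≥0∞) = 0
        · rw [h0, ENNReal.zero_rpow_of_pos hq0]
          exact zero_le
        · calc (‖k x‖₊ : ℝ≥0∞) ^ q = (‖k x‖₊ : ℝ≥0∞) ^ (q - 1 + 1) := by
                rw [sub_add_cancel]
            _ = (‖k x‖₊ : ℝ≥0∞) ^ (q - 1) * (‖k x‖₊ : ℝ≥0∞) ^ (1 : ℝ) :=
                ENNReal.rpow_add _ _ h0 ENNReal.coe_ne_top
            _ ≤ A ^ (q - 1) * (‖k x‖₊ : ℝ≥0∞) := by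
                rw [ENNReal.rpow_one]
                exact mul_le_mul' (ENNReal.rpow_le_rpow hx (by linarith)) le_rfl
      have hconst : ENNReal.ofReal (2 * M) ^ q * A ^ (q - 1) ≠ ⊤ :=
        ENNReal.mul_ne_top
          (ENNReal.rpow_ne_top_of_nonneg hq0.le ENNReal.ofReal_ne_top)
          (ENNReal.rpow_ne_top_of_nonneg (by linarith) hkinfty)
      apply ne_top_of_le_ne_top (ENNReal.mul_ne_top hconst hk1.2.ne)
      calc (∫⁻ x, (ENNReal.ofReal (2 * M) * (‖k x‖₊ : ℝ≥0∞)) ^ q ∂μ)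
          ≤ ∫⁻ x, ENNReal.ofReal (2 * M) ^ q * A ^ (q - 1) * (‖k x‖₊ : ℝ≥0∞) ∂μ :=
            lintegral_mono_ae hpt
        _ = ENNReal.ofReal (2 * M) ^ q * A ^ (q - 1) * ∫⁻ x, (‖k x‖₊ : ℝ≥0∞) ∂μ :=
            lintegral_const_mul' _ _ hconst
    have hlim : ∀ᵐ x ∂μ, Tendsto (fun n => ENNReal.ofReal (w n x) ^ q) atTop
        (𝓝 ((fun _ => (0 : ℝ≥0∞)) x)) := by
      filter_upwards [hu_ae, hv_ae] with x hux hvx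
      have h1 : Tendsto (fun n => (un n x, vn n x)) atTop (𝓝 (u x, v x)) :=
        hux.prodMk_nhds hvx
      have h2 : Tendsto (fun n => g (un n x, vn n x)) atTop (𝓝 (g (u x, v x))) :=
        (hg.tendsto _).comp h1
      have h3 : Tendsto (fun n => w n x) atTop (𝓝 0) := by
        have ha : Tendsto (fun n => g (un n x, vn n x) - g (u x, v x)) atTop (𝓝 0) := by
          simpa using h2.sub (tendsto_const_nhds :
            Tendsto (fun _ : ℕ => g (u x, v x)) atTop (𝓝 (g (u x, v x))))
        have hb := Filter.Tendsto.const_mul (|k x|) ha.abs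
        simpa using hb
      have h4 : Tendsto (fun n => ENNReal.ofReal (w n x)) atTop (𝓝 0) := by
        simpa using ENNReal.tendsto_ofReal h3
      have h5 := h4.ennrpow_const q
      simpa [ENNReal.zero_rpow_of_pos hq0] using h5
    have := tendsto_lintegral_of_dominated_convergence'
      (fun x => (ENNReal.ofReal (2 * M) * (‖k x‖₊ : ℝ≥0∞)) ^ q)
      (fun n => ENNReal.continuous_rpow_const.measurable.comp_aemeasurable (hWn n)) hbnd hfin hlim
    simpa using this
  -- conclude
  have hlim2 : Tendsto (fun n => I n ^ (1 / q) * C) atTop (𝓝 0) := by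
    have h4 : Tendsto (fun n => I n ^ (1 / q)) atTop (𝓝 0) := by
      have := hItendsto.ennrpow_const (1 / q)
      simpa [ENNReal.zero_rpow_of_pos (show (0:ℝ) < q⁻¹ by positivity)] using this
    have := ENNReal.Tendsto.mul_const h4 (Or.inr hCne)
    simpa using this
  have hFlim : Tendsto F atTop (𝓝 0) :=
    tendsto_of_tendsto_of_tendsto_of_le_of_le tendsto_const_nhds hlim2
      (fun n => zero_le) hle
  have : (fun n => ∫ x, |k x| * |g (un n x, vn n x) - g (u x, v x)| * |un n x - u x|)
      = fun n => (F n).toReal := funext key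
  rw [this]
  have := (ENNReal.tendsto_toReal (by simp)).comp hFlim
  simpa [Function.comp_def] using this
end
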